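/- arXiv:2304.10025 — 3 statements merged into one kernel-verified Lean document; each statement's English description precedes it below -/
import Mathlib

section
/- Let V and G be {0,1}-valued random variables with V ≥ G almost surely, and let X be any random variable. Then X is independent of the pair (V, G) if and only if X is independent of V and X is independent of G. -/
open Finset

/-- If `V ≥ G` almost surely for `{0,1}`-valued (`Bool`-valued)
random variables `V, G`, then for any random variable `X`, `X` is independent of
the pair `(V, G)` iff `X ⊥ V` and `X ⊥ G`.  The joint law is encoded by the
probability mass function `f x v g = P(X = x, V = v, G = g)`. -/
theorem independence_of_pair_iff_pairwise_of_monotone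
    {𝒳 : Type*} [Fintype 𝒳]
    (f : 𝒳 → Bool → Bool → ℝ)
    (hnn : ∀ x v g, 0 ≤ f x v g)
    (hsum : ∑ x, ∑ v, ∑ g, f x v g = 1)
    -- V ≥ G almost surely: the event {V = v, G = g} with g > v has probability 0
    (hmono : ∀ x (v g : Bool), ¬ g ≤ v → f x v g = 0) :
    -- X ⊥ (V, G) : P(X=x, V=v, G=g) = P(X=x) · P(V=v, G=g)
    (∀ x v g, f x v g = (∑ v', ∑ g', f x v' g') * (∑ x', f x' v g)) ↔
      -- X ⊥ V : P(X=x, V=v) = P(X=x) · P(V=v)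
      ((∀ x v, (∑ g, f x v g) = (∑ v', ∑ g', f x v' g') * (∑ x', ∑ g, f x' v g)) ∧
        -- X ⊥ G : P(X=x, G=g) = P(X=x) · P(G=g)
        (∀ x g, (∑ v, f x v g) = (∑ v', ∑ g', f x v' g') * (∑ x', ∑ v, f x' v g))) := by
  have hb : ∀ x, f x false true = 0 := fun x => hmono x false true (by simp)
  constructor
  · intro h
    constructor
    · intro x v
      calc ∑ g, f x v g = ∑ g, (∑ v', ∑ g', f x v' g') * (∑ x', f x' v g) :=
            Finset.sum_congr rfl (fun g _ => h x v g)
        _ = (∑ v', ∑ g', f x v' g') * ∑ g, ∑ x', f x' v g := by rw [Finset.mul_sum]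
        _ = _ := by congr 1; exact Finset.sum_comm
    · intro x g
      calc ∑ v, f x v g = ∑ v, (∑ v', ∑ g', f x v' g') * (∑ x', f x' v g) :=
            Finset.sum_congr rfl (fun v _ => h x v g)
        _ = (∑ v', ∑ g', f x v' g') * ∑ v, ∑ x', f x' v g := by rw [Finset.mul_sum]
        _ = _ := by congr 1; exact Finset.sum_comm
  · rintro ⟨hV, hG⟩ x v g
    have hB : ∑ x', f x' false true = 0 := Finset.sum_eq_zero (fun x' _ => hb x')
    have h1 := hV x false
    have h2 := hG x true
    have h3 := hsum
    simp only [Fintype.sum_bool, Finset.sum_add_distrib, hb, hB, add_zero, zero_add] at h1 h2 h3 ⊢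
    cases v <;> cases g
    · linarith [h1]
    · rw [hb, hB, mul_zero]
    · linear_combination -h1 - h2 - (f x true true + (f x true false + f x false false)) * h3
    · linarith [h2]
end

section
/- Let X, V, G be discrete random variables with strictly positive joint probabilities. If X ⊥ V | G and X ⊥ G | V, then X is independent of V (unconditionally), i.e., P(X=x | V=v) = P(X=x) for all x, v. -/
open Finset

/-- For discrete random variables `X, V, G` with strictly positive
joint probabilities, if `X ⊥ V | G` and `X ⊥ G | V`, then `X` is marginally
independent of `V`: `P(X=x | V=v) = P(X=x)` for all `x, v`. -/
theorem marginal_independence_of_two_conditional_independences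
    {𝒳 𝒱 𝒢 : Type*} [Fintype 𝒳] [Fintype 𝒱] [Fintype 𝒢]
    (f : 𝒳 → 𝒱 → 𝒢 → ℝ)
    (hpos : ∀ x v g, 0 < f x v g)
    (hsum : ∑ x, ∑ v, ∑ g, f x v g = 1)
    -- X ⊥ V | G : P(X=x | V=v, G=g) = P(X=x | G=g)
    (h1 : ∀ x v g,
      f x v g / (∑ x', f x' v g) =
        (∑ v', f x v' g) / (∑ x', ∑ v', f x' v' g))
    -- X ⊥ G | V : P(X=x | V=v, G=g) = P(X=x | V=v)
    (h2 : ∀ x v g,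
      f x v g / (∑ x', f x' v g) =
        (∑ g', f x v g') / (∑ x', ∑ g', f x' v g')) :
    -- conclusion : P(X=x | V=v) = P(X=x)
    ∀ x v, (∑ g, f x v g) / (∑ x', ∑ g, f x' v g) = ∑ v', ∑ g, f x v' g := by
  have hG : Nonempty 𝒢 := by
    rcases isEmpty_or_nonempty 𝒢 with h | h
    · simp at hsum
    · exact h
  have hA : ∀ x v, 0 < ∑ g, f x v g := fun x v =>
    Finset.sum_pos (fun g _ => hpos x v g) Finset.univ_nonempty
  have hB : ∀ v, 0 < ∑ x', ∑ g, f x' v g := by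
    intro v
    rcases isEmpty_or_nonempty 𝒳 with h | h
    · exfalso; simp at hsum
    · exact Finset.sum_pos (fun x _ => hA x v) Finset.univ_nonempty
  set g0 := Classical.arbitrary 𝒢 with hg0
  set r : 𝒳 → ℝ := fun x => (∑ v', f x v' g0) / (∑ x', ∑ v', f x' v' g0) with hr
  have key : ∀ x v, (∑ g, f x v g) / (∑ x', ∑ g, f x' v g) = r x := by
    intro x v
    exact ((h2 x v g0).symm.trans (h1 x v g0))
  have hAv : ∀ x v, ∑ g, f x v g = r x * (∑ x', ∑ g, f x' v g) := by
    intro x v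
    exact (div_eq_iff (hB v).ne').mp (key x v)
  have hBsum : ∑ v, ∑ x', ∑ g, f x' v g = 1 := by
    rw [Finset.sum_comm]; exact hsum
  intro x v
  rw [key x v]
  calc r x = r x * ∑ v', ∑ x', ∑ g, f x' v' g := by rw [hBsum, mul_one]
    _ = ∑ v', r x * ∑ x', ∑ g, f x' v' g := by rw [Finset.mul_sum]
    _ = ∑ v', ∑ g, f x v' g := by
        exact Finset.sum_congr rfl fun v' _ => (hAv x v').symm
end

section
/- Under standard monotonicity (D1 ≥ D0 almost surely, both binary) and conditional ignorability of treatment (D1 ⊥ Z | X and D0 ⊥ Z | X, jointly (D1,D0) ⊥ Z | X), the principal stratum proportions conditional on X are identified as: P(D1=1, D0=1 | X) = P(D=1 | Z=0, X), P(D1=0, D0=0 | X) = P(D=0 | Z=1, X), and P(D1=1, D0=0 | X) = P(D=1 | Z=1, X) − P(D=1 | Z=0, X), where D = Z·D1 + (1−Z)·D0. -/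
open Finset Classical

/-- Probability of an event under a pmf on a finite sample space. -/
noncomputable def Pr {Ω : Type*} [Fintype Ω] (p : Ω → ℝ) (A : Ω → Prop) : ℝ :=
  ∑ ω, if A ω then p ω else 0

lemma Pr_congr {Ω : Type*} [Fintype Ω] {p : Ω → ℝ} {A B : Ω → Prop}
    (h : ∀ ω, p ω ≠ 0 → (A ω ↔ B ω)) : Pr p A = Pr p B := by
  unfold Pr
  refine Finset.sum_congr rfl fun ω _ => ?_
  by_cases hpω : p ω = 0
  · by_cases hA : A ω <;> by_cases hB : B ω <;> simp [hA, hB, hpω]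
  · rw [if_congr (h ω hpω) rfl rfl]

lemma Pr_mono {Ω : Type*} [Fintype Ω] {p : Ω → ℝ} (hp : ∀ ω, 0 ≤ p ω)
    {A B : Ω → Prop} (h : ∀ ω, A ω → B ω) : Pr p A ≤ Pr p B := by
  unfold Pr
  refine Finset.sum_le_sum fun ω _ => ?_
  by_cases hA : A ω
  · simp [hA, h ω hA]
  · by_cases hB : B ω <;> simp [hA, hB, hp ω]

lemma Pr_split {Ω : Type*} [Fintype Ω] (p : Ω → ℝ) (A : Ω → Prop) (f : Ω → Bool) :
    Pr p A = Pr p (fun ω => f ω = true ∧ A ω) + Pr p (fun ω => f ω = false ∧ A ω) := by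
  unfold Pr
  rw [← Finset.sum_add_distrib]
  refine Finset.sum_congr rfl fun ω _ => ?_
  cases hf : f ω <;> by_cases hA : A ω <;> simp [hA, hf]

lemma Pr_zero {Ω : Type*} [Fintype Ω] {p : Ω → ℝ} {A : Ω → Prop}
    (h : ∀ ω, p ω ≠ 0 → ¬ A ω) : Pr p A = 0 := by
  unfold Pr
  refine Finset.sum_eq_zero fun ω _ => ?_
  by_cases hpω : p ω = 0
  · by_cases hA : A ω <;> simp [hA, hpω]
  · simp [h ω hpω]

/-- Identification of the principal score under standard
monotonicity (`D1 ≥ D0` a.s.), consistency (`D = Z·D1 + (1−Z)·D0`), conditional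
ignorability `(D1, D0) ⊥ Z | X`, and positivity:
`P(D1=1,D0=1 | X=x) = P(D=1 | Z=0, X=x)`,
`P(D1=0,D0=0 | X=x) = P(D=0 | Z=1, X=x)`,
`P(D1=1,D0=0 | X=x) = P(D=1 | Z=1, X=x) − P(D=1 | Z=0, X=x)`. -/
theorem principal_score_identification
    {Ω 𝒳 : Type*} [Fintype Ω] [Fintype 𝒳]
    (p : Ω → ℝ) (hp : ∀ ω, 0 ≤ p ω) (hpsum : ∑ ω, p ω = 1)
    (Z D1 D0 D : Ω → Bool) (X : Ω → 𝒳)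
    -- consistency: D = Z·D1 + (1−Z)·D0
    (hD : ∀ ω, D ω = if Z ω then D1 ω else D0 ω)
    -- standard monotonicity: D1 ≥ D0 almost surely
    (hmono : ∀ ω, 0 < p ω → D0 ω ≤ D1 ω)
    -- ignorability: (D1, D0) ⊥ Z | X
    (hig : ∀ (d1 d0 z : Bool) (x : 𝒳),
      Pr p (fun ω => D1 ω = d1 ∧ D0 ω = d0 ∧ Z ω = z ∧ X ω = x) *
          Pr p (fun ω => X ω = x) =
        Pr p (fun ω => D1 ω = d1 ∧ D0 ω = d0 ∧ X ω = x) *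
          Pr p (fun ω => Z ω = z ∧ X ω = x))
    (x : 𝒳)
    -- positivity: 0 < P(Z=1 | X=x) < 1 (both treatment cells given X=x are nonnull)
    (hpos1 : 0 < Pr p (fun ω => Z ω = true ∧ X ω = x))
    (hpos0 : 0 < Pr p (fun ω => Z ω = false ∧ X ω = x)) :
    (Pr p (fun ω => D1 ω = true ∧ D0 ω = true ∧ X ω = x) /
        Pr p (fun ω => X ω = x) =
      Pr p (fun ω => D ω = true ∧ Z ω = false ∧ X ω = x) /
        Pr p (fun ω => Z ω = false ∧ X ω = x)) ∧
    (Pr p (fun ω => D1 ω = false ∧ D0 ω = false ∧ X ω = x) /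
        Pr p (fun ω => X ω = x) =
      Pr p (fun ω => D ω = false ∧ Z ω = true ∧ X ω = x) /
        Pr p (fun ω => Z ω = true ∧ X ω = x)) ∧
    (Pr p (fun ω => D1 ω = true ∧ D0 ω = false ∧ X ω = x) /
        Pr p (fun ω => X ω = x) =
      Pr p (fun ω => D ω = true ∧ Z ω = true ∧ X ω = x) /
          Pr p (fun ω => Z ω = true ∧ X ω = x) -
        Pr p (fun ω => D ω = true ∧ Z ω = false ∧ X ω = x) /
          Pr p (fun ω => Z ω = false ∧ X ω = x)) := by
  have hposX : 0 < Pr p (fun ω => X ω = x) :=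
    lt_of_lt_of_le hpos1 (Pr_mono hp fun ω h => h.2)
  -- no defiers a.s.
  have hnull : ∀ A : Ω → Prop, (∀ ω, A ω → D0 ω = true ∧ D1 ω = false) →
      Pr p A = 0 := by
    intro A hA
    refine Pr_zero fun ω hpω hAω => ?_
    obtain ⟨h0, h1⟩ := hA ω hAω
    have := hmono ω (lt_of_le_of_ne (hp ω) (Ne.symm hpω))
    rw [h0, h1] at this
    exact absurd this (by simp)
  -- consistency rewrites
  have e0 : Pr p (fun ω => D ω = true ∧ Z ω = false ∧ X ω = x) =
      Pr p (fun ω => D1 ω = true ∧ D0 ω = true ∧ Z ω = false ∧ X ω = x) := by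
    have h1 : Pr p (fun ω => D ω = true ∧ Z ω = false ∧ X ω = x) =
        Pr p (fun ω => D0 ω = true ∧ Z ω = false ∧ X ω = x) := by
      refine Pr_congr fun ω _ => ?_
      constructor
      · rintro ⟨hDω, hZ, hX⟩
        rw [hD ω, hZ] at hDω
        exact ⟨by simpa using hDω, hZ, hX⟩
      · rintro ⟨h0, hZ, hX⟩
        refine ⟨?_, hZ, hX⟩
        rw [hD ω, hZ]; simpa using h0
    have h2 : Pr p (fun ω => D0 ω = true ∧ Z ω = false ∧ X ω = x) =
        Pr p (fun ω => D1 ω = true ∧ (D0 ω = true ∧ Z ω = false ∧ X ω = x)) +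
        Pr p (fun ω => D1 ω = false ∧ (D0 ω = true ∧ Z ω = false ∧ X ω = x)) :=
      Pr_split p _ D1
    have h3 : Pr p (fun ω => D1 ω = false ∧ (D0 ω = true ∧ Z ω = false ∧ X ω = x)) = 0 :=
      hnull _ fun ω h => ⟨h.2.1, h.1⟩
    rw [h1, h2, h3, add_zero]
  have e1 : Pr p (fun ω => D ω = false ∧ Z ω = true ∧ X ω = x) =
      Pr p (fun ω => D1 ω = false ∧ D0 ω = false ∧ Z ω = true ∧ X ω = x) := by
    have h1 : Pr p (fun ω => D ω = false ∧ Z ω = true ∧ X ω = x) =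
        Pr p (fun ω => D1 ω = false ∧ Z ω = true ∧ X ω = x) := by
      refine Pr_congr fun ω _ => ?_
      constructor
      · rintro ⟨hDω, hZ, hX⟩
        rw [hD ω, hZ] at hDω
        exact ⟨by simpa using hDω, hZ, hX⟩
      · rintro ⟨h0, hZ, hX⟩
        refine ⟨?_, hZ, hX⟩
        rw [hD ω, hZ]; simpa using h0
    have h2 : Pr p (fun ω => D1 ω = false ∧ Z ω = true ∧ X ω = x) =
        Pr p (fun ω => D0 ω = true ∧ (D1 ω = false ∧ Z ω = true ∧ X ω = x)) +
        Pr p (fun ω => D0 ω = false ∧ (D1 ω = false ∧ Z ω = true ∧ X ω = x)) :=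
      Pr_split p _ D0
    have h3 : Pr p (fun ω => D0 ω = true ∧ (D1 ω = false ∧ Z ω = true ∧ X ω = x)) = 0 :=
      hnull _ fun ω h => ⟨h.1, h.2.1⟩
    have h4 : Pr p (fun ω => D0 ω = false ∧ (D1 ω = false ∧ Z ω = true ∧ X ω = x)) =
        Pr p (fun ω => D1 ω = false ∧ D0 ω = false ∧ Z ω = true ∧ X ω = x) :=
      Pr_congr fun ω _ => by tauto
    rw [h1, h2, h3, h4, zero_add]
  have e2 : Pr p (fun ω => D ω = true ∧ Z ω = true ∧ X ω = x) =
      Pr p (fun ω => D1 ω = true ∧ D0 ω = true ∧ Z ω = true ∧ X ω = x) +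
      Pr p (fun ω => D1 ω = true ∧ D0 ω = false ∧ Z ω = true ∧ X ω = x) := by
    have h1 : Pr p (fun ω => D ω = true ∧ Z ω = true ∧ X ω = x) =
        Pr p (fun ω => D1 ω = true ∧ Z ω = true ∧ X ω = x) := by
      refine Pr_congr fun ω _ => ?_
      constructor
      · rintro ⟨hDω, hZ, hX⟩
        rw [hD ω, hZ] at hDω
        exact ⟨by simpa using hDω, hZ, hX⟩
      · rintro ⟨h0, hZ, hX⟩
        refine ⟨?_, hZ, hX⟩
        rw [hD ω, hZ]; simpa using h0
    have h2 : Pr p (fun ω => D1 ω = true ∧ Z ω = true ∧ X ω = x) =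
        Pr p (fun ω => D0 ω = true ∧ (D1 ω = true ∧ Z ω = true ∧ X ω = x)) +
        Pr p (fun ω => D0 ω = false ∧ (D1 ω = true ∧ Z ω = true ∧ X ω = x)) :=
      Pr_split p _ D0
    have h3 : Pr p (fun ω => D0 ω = true ∧ (D1 ω = true ∧ Z ω = true ∧ X ω = x)) =
        Pr p (fun ω => D1 ω = true ∧ D0 ω = true ∧ Z ω = true ∧ X ω = x) :=
      Pr_congr fun ω _ => by tauto
    have h4 : Pr p (fun ω => D0 ω = false ∧ (D1 ω = true ∧ Z ω = true ∧ X ω = x)) =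
        Pr p (fun ω => D1 ω = true ∧ D0 ω = false ∧ Z ω = true ∧ X ω = x) :=
      Pr_congr fun ω _ => by tauto
    rw [h1, h2, h3, h4]
  -- conditional-probability identities from ignorability
  have q11t : Pr p (fun ω => D1 ω = true ∧ D0 ω = true ∧ Z ω = true ∧ X ω = x) /
      Pr p (fun ω => Z ω = true ∧ X ω = x) =
      Pr p (fun ω => D1 ω = true ∧ D0 ω = true ∧ X ω = x) /
      Pr p (fun ω => X ω = x) := by
    rw [div_eq_div_iff hpos1.ne' hposX.ne']
    exact hig true true true x
  have q10t : Pr p (fun ω => D1 ω = true ∧ D0 ω = false ∧ Z ω = true ∧ X ω = x) /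
      Pr p (fun ω => Z ω = true ∧ X ω = x) =
      Pr p (fun ω => D1 ω = true ∧ D0 ω = false ∧ X ω = x) /
      Pr p (fun ω => X ω = x) := by
    rw [div_eq_div_iff hpos1.ne' hposX.ne']
    exact hig true false true x
  have q11f : Pr p (fun ω => D1 ω = true ∧ D0 ω = true ∧ Z ω = false ∧ X ω = x) /
      Pr p (fun ω => Z ω = false ∧ X ω = x) =
      Pr p (fun ω => D1 ω = true ∧ D0 ω = true ∧ X ω = x) /
      Pr p (fun ω => X ω = x) := by
    rw [div_eq_div_iff hpos0.ne' hposX.ne']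
    exact hig true true false x
  have q00t : Pr p (fun ω => D1 ω = false ∧ D0 ω = false ∧ Z ω = true ∧ X ω = x) /
      Pr p (fun ω => Z ω = true ∧ X ω = x) =
      Pr p (fun ω => D1 ω = false ∧ D0 ω = false ∧ X ω = x) /
      Pr p (fun ω => X ω = x) := by
    rw [div_eq_div_iff hpos1.ne' hposX.ne']
    exact hig false false true x
  refine ⟨?_, ?_, ?_⟩
  · rw [e0, q11f]
  · rw [e1, q00t]
  · rw [e0, e2, add_div, q11t, q10t, q11f]
    ring
end
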